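/- Let f be continuous on [0,∞) and define ℱ[f](x) = ∫_0^{π/2} f(x sin θ) dθ and [f]_1(x) = x^2 f(x) + x ∫_0^x f(s) ds. Then for all x > 0, ℱ[f](x) = x^(−2) · ℱ[[f]_1](x). -/

import Mathlib

open MeasureTheory

/-- Key identity for continuous `g` on all of `ℝ`. -/
lemma aux_key (g : ℝ → ℝ) (hg : Continuous g) (x : ℝ) :
    (∫ θ in (0:ℝ)..(Real.pi/2),
      ((x * Real.sin θ)^2 * g (x * Real.sin θ)
        + (x * Real.sin θ) * ∫ s in (0:ℝ)..(x * Real.sin θ), g s))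
    = x^2 * ∫ θ in (0:ℝ)..(Real.pi/2), g (x * Real.sin θ) := by
  set G : ℝ → ℝ := fun θ => ∫ s in (0:ℝ)..(x * Real.sin θ), g s with hG_def
  have hGc : Continuous G := by
    exact (intervalIntegral.continuous_primitive
      (fun a b => hg.intervalIntegrable a b) 0).comp
      (continuous_const.mul Real.continuous_sin)
  have hD : ∀ θ : ℝ, HasDerivAt (fun t => -(x * Real.cos t) * G t)
      (x * Real.sin θ * G θ - (x * Real.cos θ)^2 * g (x * Real.sin θ)) θ := by
    intro θ
    have h1 : HasDerivAt (fun y => ∫ s in (0:ℝ)..y, g s) (g (x * Real.sin θ))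
        (x * Real.sin θ) :=
      intervalIntegral.integral_hasDerivAt_right (hg.intervalIntegrable _ _)
        (hg.stronglyMeasurable.stronglyMeasurableAtFilter) hg.continuousAt
    have h2 : HasDerivAt (fun t => x * Real.sin t) (x * Real.cos θ) θ :=
      (Real.hasDerivAt_sin θ).const_mul x
    have hG' : HasDerivAt G (g (x * Real.sin θ) * (x * Real.cos θ)) θ := by have := h1.comp θ h2; exact this
    have h3 : HasDerivAt (fun t => -(x * Real.cos t)) (x * Real.sin θ) θ := by
      have := ((Real.hasDerivAt_cos θ).const_mul x).neg
      exact this.congr_deriv (by ring)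
    have := h3.mul hG'
    exact this.congr_deriv (by ring)
  have hzero : (∫ θ in (0:ℝ)..(Real.pi/2),
      (x * Real.sin θ * G θ - (x * Real.cos θ)^2 * g (x * Real.sin θ))) = 0 := by
    have hint : IntervalIntegrable (fun θ =>
        x * Real.sin θ * G θ - (x * Real.cos θ)^2 * g (x * Real.sin θ))
        volume 0 (Real.pi/2) := by
      apply Continuous.intervalIntegrable
      continuity
    have := intervalIntegral.integral_eq_sub_of_hasDerivAt
      (f := fun t => -(x * Real.cos t) * G t) (fun θ _ => hD θ) hint
    rw [this]
    simp [hG_def, Real.cos_pi_div_two]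
  have hpt : ∀ θ : ℝ, (x * Real.sin θ)^2 * g (x * Real.sin θ) + (x * Real.sin θ) * G θ
      = x^2 * g (x * Real.sin θ)
        + (x * Real.sin θ * G θ - (x * Real.cos θ)^2 * g (x * Real.sin θ)) := by
    intro θ
    have := Real.sin_sq_add_cos_sq θ
    linear_combination (x^2 * g (x * Real.sin θ)) * this
  calc (∫ θ in (0:ℝ)..(Real.pi/2),
      ((x * Real.sin θ)^2 * g (x * Real.sin θ) + (x * Real.sin θ) * G θ))
      = ∫ θ in (0:ℝ)..(Real.pi/2), (x^2 * g (x * Real.sin θ)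
        + (x * Real.sin θ * G θ - (x * Real.cos θ)^2 * g (x * Real.sin θ))) := by
        apply intervalIntegral.integral_congr
        intro θ _
        exact hpt θ
    _ = (∫ θ in (0:ℝ)..(Real.pi/2), x^2 * g (x * Real.sin θ))
        + ∫ θ in (0:ℝ)..(Real.pi/2),
          (x * Real.sin θ * G θ - (x * Real.cos θ)^2 * g (x * Real.sin θ)) := by
        apply intervalIntegral.integral_add
        · apply Continuous.intervalIntegrable; continuity
        · apply Continuous.intervalIntegrable; continuity
    _ = x^2 * ∫ θ in (0:ℝ)..(Real.pi/2), g (x * Real.sin θ) := by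
        rw [hzero, add_zero, intervalIntegral.integral_const_mul]

/-- `ℱ[f](x) = x^{-2} ℱ[[f]_1](x)` for all `x > 0`. -/
theorem stmt_6 (f : ℝ → ℝ) (hf : ContinuousOn f (Set.Ici 0)) (x : ℝ) (hx : 0 < x) :
    ∫ θ in (0:ℝ)..(Real.pi/2), f (x * Real.sin θ)
      = x ^ (-2 : ℝ) *
        ∫ θ in (0:ℝ)..(Real.pi/2),
          (fun y : ℝ => y ^ 2 * f y + y * ∫ s in (0:ℝ)..y, f s) (x * Real.sin θ) := by
  set g : ℝ → ℝ := fun y => f (max y 0) with hg_def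
  have hg : Continuous g :=
    hf.comp_continuous (continuous_id.max continuous_const) (fun y => le_max_right y 0)
  have hgf : ∀ y : ℝ, 0 ≤ y → g y = f y := fun y hy => by
    simp [hg_def, max_eq_left hy]
  have hθ : ∀ θ ∈ Set.uIcc (0:ℝ) (Real.pi/2), 0 ≤ x * Real.sin θ := by
    intro θ hθ
    rw [Set.uIcc_of_le (by positivity)] at hθ
    exact mul_nonneg hx.le (Real.sin_nonneg_of_nonneg_of_le_pi hθ.1
      (hθ.2.trans (by linarith [Real.pi_pos])))
  have hL : (∫ θ in (0:ℝ)..(Real.pi/2), f (x * Real.sin θ))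
      = ∫ θ in (0:ℝ)..(Real.pi/2), g (x * Real.sin θ) := by
    apply intervalIntegral.integral_congr
    intro θ h
    exact (hgf _ (hθ θ h)).symm
  have hR : (∫ θ in (0:ℝ)..(Real.pi/2),
        (fun y : ℝ => y ^ 2 * f y + y * ∫ s in (0:ℝ)..y, f s) (x * Real.sin θ))
      = ∫ θ in (0:ℝ)..(Real.pi/2),
        ((x * Real.sin θ)^2 * g (x * Real.sin θ)
          + (x * Real.sin θ) * ∫ s in (0:ℝ)..(x * Real.sin θ), g s) := by
    apply intervalIntegral.integral_congr
    intro θ h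
    have hy := hθ θ h
    simp only
    rw [hgf _ hy]
    congr 1
    congr 1
    apply intervalIntegral.integral_congr
    intro s hs
    rw [Set.uIcc_of_le hy] at hs
    exact (hgf _ hs.1).symm
  rw [hL, hR, aux_key g hg x]
  have hxpow : x ^ (-2:ℝ) = (x^2)⁻¹ := by
    rw [Real.rpow_neg hx.le, show (2:ℝ) = ((2:ℕ):ℝ) by norm_num, Real.rpow_natCast]
  rw [hxpow, inv_mul_cancel_left₀ (pow_ne_zero 2 hx.ne')]
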